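/- arXiv:1209.6537 — 5 statements merged into one kernel-verified Lean document; each statement's English description precedes it below -/
import Mathlib

section
/- Let d ≥ 2 and suppose a_2, ..., a_d ∈ ℝ^d are linearly independent vectors. Then there exist at most two d-tuples (b_1, ..., b_d) of vectors in ℝ^d satisfying |b_1| = |b_2| = ... = |b_d| = 1 and b_j - b_1 = a_j for all j = 2, ..., d. -/
theorem unit_chords_at_most_two (d : ℕ) (hd : 2 ≤ d)
    (a : Fin d → EuclideanSpace ℝ (Fin d))
    (ha : LinearIndependent ℝ
      (fun j : {j : Fin d // j ≠ ⟨0, by omega⟩} => a j.1)) :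
    ∃ b₁ b₂ : Fin d → EuclideanSpace ℝ (Fin d),
      {b : Fin d → EuclideanSpace ℝ (Fin d) |
        (∀ i, ‖b i‖ = 1) ∧
        ∀ j : Fin d, j ≠ ⟨0, by omega⟩ → b j - b ⟨0, by omega⟩ = a j} ⊆ {b₁, b₂} := by
  set i0 : Fin d := ⟨0, by omega⟩ with hi0
  set S : Set (Fin d → EuclideanSpace ℝ (Fin d)) :=
    {b | (∀ i, ‖b i‖ = 1) ∧ ∀ j : Fin d, j ≠ i0 → b j - b i0 = a j} with hSdef
  -- b determined by value at i0
  have hdet : ∀ x ∈ S, ∀ y ∈ S, x i0 = y i0 → x = y := by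
    intro x hx y hy h
    funext j
    by_cases hj : j = i0
    · subst hj; exact h
    · have h1 := hx.2 j hj
      have h2 := hy.2 j hj
      have : x j - x i0 = y j - y i0 := by rw [h1, h2]
      rw [h] at this
      exact sub_left_injective this
  -- orthogonality relation
  have hinner : ∀ x ∈ S, ∀ j : Fin d, j ≠ i0 →
      2 * (inner ℝ (x i0) (a j) : ℝ) + ‖a j‖ ^ 2 = 0 := by
    intro x hx j hj
    have h1 : x j = x i0 + a j := by
      have := hx.2 j hj; rw [← this]; abel
    have h2 : ‖x i0 + a j‖ ^ 2 = 1 := by rw [← h1, hx.1 j]; norm_num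
    have h3 : ‖x i0‖ ^ 2 = 1 := by rw [hx.1 i0]; norm_num
    rw [norm_add_sq_real, h3] at h2
    linarith
  -- the key three-element lemma
  have key : ∀ x ∈ S, ∀ y ∈ S, ∀ z ∈ S, x = y ∨ z = x ∨ z = y := by
    intro x hx y hy z hz
    by_cases hxy : x i0 = y i0
    · exact Or.inl (hdet x hx y hy hxy)
    right
    set K : Submodule ℝ (EuclideanSpace ℝ (Fin d)) :=
      Submodule.span ℝ (Set.range (fun j : {j : Fin d // j ≠ i0} => a j.1)) with hK
    have hmemOrth : ∀ w ∈ S, ∀ w' ∈ S, w' i0 - w i0 ∈ Kᗮ := by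
      intro w hw w' hw'
      rw [Submodule.mem_orthogonal]
      intro v hv
      induction hv using Submodule.span_induction with
      | mem v hvmem =>
        obtain ⟨j, rfl⟩ := hvmem
        have h1 := hinner w hw j.1 j.2
        have h2 := hinner w' hw' j.1 j.2
        have : (inner ℝ (a j.1) (w' i0) : ℝ) - inner ℝ (a j.1) (w i0) = 0 := by
          rw [real_inner_comm (w' i0) (a j.1), real_inner_comm (w i0) (a j.1)]
          linarith
        rw [inner_sub_right]
        exact this
      | zero => simp
      | add v₁ v₂ _ _ h1 h2 => rw [inner_add_left, h1, h2]; ring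
      | smul c v _ h1 => rw [inner_smul_left, h1]; simp
    have hfinK : Module.finrank ℝ K = d - 1 := by
      rw [hK, finrank_span_eq_card ha, Fintype.card_subtype_compl]
      simp
    have hfinOrth : Module.finrank ℝ Kᗮ = 1 := by
      have := K.finrank_add_finrank_orthogonal
      rw [finrank_euclideanSpace_fin, hfinK] at this
      omega
    set u := y i0 - x i0 with hu
    set v := z i0 - x i0 with hv
    have hu0 : u ≠ 0 := sub_ne_zero.mpr (Ne.symm hxy)
    have huK : u ∈ Kᗮ := hmemOrth x hx y hy
    have hvK : v ∈ Kᗮ := hmemOrth x hx z hz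
    -- span u = Kᗮ
    have hspan : (ℝ ∙ u) = Kᗮ := by
      apply Submodule.eq_of_le_of_finrank_le
      · rwa [Submodule.span_singleton_le_iff_mem]
      · rw [hfinOrth, finrank_span_singleton hu0]
    obtain ⟨t, ht⟩ := Submodule.mem_span_singleton.mp (hspan ▸ hvK)
    -- quadratic relations
    have hyu : y i0 = x i0 + u := by rw [hu]; abel
    have hzv : z i0 = x i0 + v := by rw [hv]; abel
    have hx1 : ‖x i0‖ ^ 2 = 1 := by rw [hx.1 i0]; norm_num
    have hqu : 2 * (inner ℝ (x i0) u : ℝ) + ‖u‖ ^ 2 = 0 := by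
      have : ‖x i0 + u‖ ^ 2 = 1 := by rw [← hyu, hy.1 i0]; norm_num
      rw [norm_add_sq_real, hx1] at this; linarith
    have hqv : 2 * (inner ℝ (x i0) v : ℝ) + ‖v‖ ^ 2 = 0 := by
      have : ‖x i0 + v‖ ^ 2 = 1 := by rw [← hzv, hz.1 i0]; norm_num
      rw [norm_add_sq_real, hx1] at this; linarith
    rw [← ht] at hqv
    rw [inner_smul_right, norm_smul] at hqv
    have hnu : (0:ℝ) < ‖u‖ ^ 2 := pow_pos (norm_pos_iff.mpr hu0) 2
    have ht01 : t = 0 ∨ t = 1 := by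
      have : t * (2 * (inner ℝ (x i0) u : ℝ)) + t ^ 2 * ‖u‖ ^ 2 = 0 := by
        rw [mul_pow] at hqv
        calc t * (2 * (inner ℝ (x i0) u : ℝ)) + t ^ 2 * ‖u‖ ^ 2
            = 2 * (t * inner ℝ (x i0) u) + ‖t‖ ^ 2 * ‖u‖ ^ 2 := by
              rw [Real.norm_eq_abs, sq_abs]; ring
          _ = 0 := hqv
      have h2 : t * (-(‖u‖^2)) + t ^ 2 * ‖u‖ ^ 2 = 0 := by
        have h3 : 2 * (inner ℝ (x i0) u : ℝ) = -(‖u‖^2) := by linarith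
        rw [← h3]; exact this
      have h4 : t * (t - 1) * ‖u‖ ^ 2 = 0 := by ring_nf; ring_nf at h2; linarith
      rcases mul_eq_zero.mp h4 with h5 | h5
      · rcases mul_eq_zero.mp h5 with h6 | h6
        · exact Or.inl h6
        · exact Or.inr (by linarith)
      · exact absurd h5 (ne_of_gt hnu)
    rcases ht01 with rfl | rfl
    · left
      apply hdet z hz x hx
      have : v = 0 := by rw [← ht]; simp
      rw [hzv, this, add_zero]
    · right
      apply hdet z hz y hy
      have : v = u := by rw [← ht]; simp
      rw [hzv, this, ← hyu]
  -- conclude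
  by_cases hne : S.Nonempty
  · obtain ⟨x, hx⟩ := hne
    by_cases h2 : ∃ y ∈ S, y ≠ x
    · obtain ⟨y, hy, hyx⟩ := h2
      refine ⟨x, y, fun z hz => ?_⟩
      rcases key x hx y hy z hz with h | h | h
      · exact absurd h.symm hyx
      · exact Or.inl h
      · exact Or.inr h
    · push_neg at h2
      exact ⟨x, x, fun z hz => Or.inl (h2 z hz)⟩
  · exact ⟨0, 0, fun z hz => absurd ⟨z, hz⟩ hne⟩
end

section
/- Fix d ≥ 2. There is a constant C_d > 0 such that for every finite set P ⊂ ℝ^d with the property that every d-element subset of P is affinely independent, the number of ordered pairs (p_1, p_2) ∈ P × P with |p_1 - p_2| = 1 is at most C_d · |P|^{(2d-1)/d}. -/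
open EuclideanGeometry Finset RealInnerProductSpace

lemma key_geo (d : ℕ) (hd : 1 ≤ d) (S : Finset (EuclideanSpace ℝ (Fin d)))
    (hScard : S.card = d)
    (hai : AffineIndependent ℝ (fun s : S => (s : EuclideanSpace ℝ (Fin d))))
    {p q r : EuclideanSpace ℝ (Fin d)}
    (hp : ∀ s ∈ S, dist p s = 1) (hq : ∀ s ∈ S, dist q s = 1)
    (hr : ∀ s ∈ S, dist r s = 1) :
    p = q ∨ p = r ∨ q = r := by
  classical
  by_contra hcon
  push_neg at hcon
  obtain ⟨hpq, hpr, hqr⟩ := hcon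
  obtain ⟨s₀, hs₀⟩ := Finset.card_pos.mp (by omega : 0 < S.card)
  -- orthogonality facts
  have horth : ∀ x : EuclideanSpace ℝ (Fin d), (∀ s ∈ S, dist x s = 1) →
      ∀ s ∈ S, (inner ℝ (x - p) ( (s : EuclideanSpace ℝ (Fin d)) - s₀) : ℝ) = 0 := by
    intro x hx s hs
    have := EuclideanGeometry.inner_vsub_vsub_of_dist_eq_of_dist_eq
      (c₁ := x) (c₂ := p) (p₁ := (s₀ : EuclideanSpace ℝ (Fin d))) (p₂ := s)
      (by rw [dist_comm (s₀:EuclideanSpace ℝ (Fin d)) x, dist_comm (s:EuclideanSpace ℝ (Fin d)) x, hx s₀ hs₀, hx s hs])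
      (by rw [dist_comm (s₀:EuclideanSpace ℝ (Fin d)) p, dist_comm (s:EuclideanSpace ℝ (Fin d)) p, hp s₀ hs₀, hp s hs])
    -- this : ⟪p -ᵥ x, s -ᵥ s₀⟫ = 0
    have h2 : (inner ℝ (p - x) ( (s : EuclideanSpace ℝ (Fin d)) - s₀) : ℝ) = 0 := this
    have : (inner ℝ (-(p - x)) ( (s : EuclideanSpace ℝ (Fin d)) - s₀) : ℝ) = 0 := by
      rw [inner_neg_left, h2, neg_zero]
    simpa using this
  -- linear independence of differences
  set s₀' : S := ⟨s₀, hs₀⟩ with hs₀'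
  have hli := (affineIndependent_iff_linearIndependent_vsub ℝ
    (fun s : S => (s : EuclideanSpace ℝ (Fin d))) s₀').mp hai
  set V : Submodule ℝ (EuclideanSpace ℝ (Fin d)) :=
    Submodule.span ℝ (Set.range fun i : {x : S // x ≠ s₀'} =>
      ((i : S) : EuclideanSpace ℝ (Fin d)) -ᵥ (s₀ : EuclideanSpace ℝ (Fin d))) with hV
  have hfinV : Module.finrank ℝ V = d - 1 := by
    rw [hV, finrank_span_eq_card hli]
    have : Fintype.card {x : S // x ≠ s₀'} = d - 1 := by
      simp [Fintype.card_subtype_compl, Fintype.card_coe, hScard]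
    exact this
  have hfinVo : Module.finrank ℝ Vᗮ = 1 := by
    have := V.finrank_add_finrank_orthogonal
    rw [hfinV, finrank_euclideanSpace_fin] at this
    omega
  -- membership in Vᗮ
  have hmem : ∀ x : EuclideanSpace ℝ (Fin d), (∀ s ∈ S, dist x s = 1) → x - p ∈ Vᗮ := by
    intro x hx
    rw [Submodule.mem_orthogonal]
    intro v hv
    induction hv using Submodule.span_induction with
    | mem v hv =>
        obtain ⟨i, rfl⟩ := hv
        have := horth x hx i (i : S).2
        rw [real_inner_comm] at this
        simpa [vsub_eq_sub] using this
    | zero => simp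
    | add a b _ _ ha hb => rw [inner_add_left, ha, hb, add_zero]
    | smul c a _ ha => rw [inner_smul_left, ha, mul_zero]
  have hu : q - p ∈ Vᗮ := hmem q hq
  have hw : r - p ∈ Vᗮ := hmem r hr
  have hune : q - p ≠ 0 := sub_ne_zero.mpr (Ne.symm hpq)
  have hspan : Submodule.span ℝ {q - p} = Vᗮ := by
    apply Submodule.eq_of_le_of_finrank_le
    · rwa [Submodule.span_singleton_le_iff_mem]
    · rw [hfinVo, finrank_span_singleton hune]
  have hwmem : r - p ∈ Submodule.span ℝ ({q - p} : Set (EuclideanSpace ℝ (Fin d))) := by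
    rw [hspan]; exact hw
  obtain ⟨c, hc⟩ := Submodule.mem_span_singleton.mp hwmem
  -- algebra on the sphere around s₀
  set u : EuclideanSpace ℝ (Fin d) := q - p with hu'
  set v : EuclideanSpace ℝ (Fin d) := p - s₀ with hv'
  have hnv : ‖v‖ = 1 := by rw [hv', ← dist_eq_norm]; exact hp s₀ hs₀
  have hnvu : ‖v + u‖ = 1 := by
    rw [(by rw [hv', hu']; abel : v + u = q - s₀), ← dist_eq_norm]; exact hq s₀ hs₀
  have hnvw : ‖v + c • u‖ = 1 := by
    rw [(by rw [hv']; rw [hc]; abel : v + c • u = r - s₀), ← dist_eq_norm]; exact hr s₀ hs₀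
  have key1 : v + u = q - s₀ := by rw [hv', hu']; abel
  have key2 : v + c • u = r - s₀ := by rw [hv', hc]; abel
  have e1 : ‖v + u‖^2 = ‖v‖^2 + 2 * (inner ℝ (v) ( u) : ℝ) + ‖u‖^2 := norm_add_sq_real v u
  have e2 : ‖v + c • u‖^2 = ‖v‖^2 + 2 * (c * (inner ℝ (v) ( u) : ℝ)) + c^2 * ‖u‖^2 := by
    rw [norm_add_sq_real, real_inner_smul_right, norm_smul]
    rw [mul_pow, Real.norm_eq_abs, sq_abs]
  rw [hnvu, hnv] at e1
  rw [hnvw, hnv] at e2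
  have hun0 : ‖u‖ ≠ 0 := norm_ne_zero_iff.mpr hune
  have hcc : c * (c - 1) * ‖u‖^2 = 0 := by linear_combination c * e1 - e2
  have : c = 0 ∨ c = 1 := by
    rcases mul_eq_zero.mp hcc with h | h
    · rcases mul_eq_zero.mp h with h | h
      · exact Or.inl h
      · exact Or.inr (by linarith)
    · exact absurd h (pow_ne_zero 2 hun0)
  rcases this with rfl | rfl
  · rw [zero_smul] at hc
    exact hpr (sub_eq_zero.mp hc.symm).symm
  · rw [one_smul, hu'] at hc
    exact hqr (sub_left_inj.mp hc)

lemma nat_sub_pow_le_desc (a d : ℕ) : (a - d)^d ≤ d.factorial * a.choose d := by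
  rw [← Nat.descFactorial_eq_factorial_mul_choose, Nat.descFactorial_eq_prod_range]
  calc (a - d)^d = ∏ _i ∈ Finset.range d, (a - d) := by
        rw [Finset.prod_const, Finset.card_range]
    _ ≤ ∏ i ∈ Finset.range d, (a - i) := by
        apply Finset.prod_le_prod'
        intro i hi
        exact Nat.sub_le_sub_left (le_of_lt (Finset.mem_range.mp hi)) a

lemma count_le (d : ℕ) (hd : 1 ≤ d) (P : Finset (EuclideanSpace ℝ (Fin d)))
    (hP : ∀ S : Finset (EuclideanSpace ℝ (Fin d)), S ⊆ P → S.card = d →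
      AffineIndependent ℝ (fun s : S => (s : EuclideanSpace ℝ (Fin d)))) :
    ∑ p ∈ P, ((P.filter fun q => dist p q = 1).card).choose d ≤ 2 * (P.card).choose d := by
  classical
  set N : EuclideanSpace ℝ (Fin d) → Finset (EuclideanSpace ℝ (Fin d)) :=
    fun p => P.filter (fun q => dist p q = 1) with hN
  have hNsub : ∀ p, N p ⊆ P := fun p => Finset.filter_subset _ _
  calc ∑ p ∈ P, ((N p).card).choose d
      = ∑ p ∈ P, ((N p).powersetCard d).card := by
        simp [Finset.card_powersetCard]
    _ = ∑ p ∈ P, ((P.powersetCard d).filter (fun S => S ⊆ N p)).card := by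
        refine Finset.sum_congr rfl fun p _ => ?_
        congr 1
        ext S
        simp only [Finset.mem_powersetCard, Finset.mem_filter]
        exact ⟨fun ⟨h1, h2⟩ => ⟨⟨h1.trans (hNsub p), h2⟩, h1⟩, fun ⟨⟨_, h2⟩, h1⟩ => ⟨h1, h2⟩⟩
    _ = ∑ p ∈ P, ∑ S ∈ P.powersetCard d, if S ⊆ N p then 1 else 0 :=
        Finset.sum_congr rfl fun p _ => Finset.card_filter _ _
    _ = ∑ S ∈ P.powersetCard d, ∑ p ∈ P, if S ⊆ N p then 1 else 0 := Finset.sum_comm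
    _ = ∑ S ∈ P.powersetCard d, (P.filter (fun p => S ⊆ N p)).card :=
        Finset.sum_congr rfl fun S _ => (Finset.card_filter _ _).symm
    _ ≤ ∑ _S ∈ P.powersetCard d, 2 := by
        apply Finset.sum_le_sum
        intro S hS
        obtain ⟨hSP, hScard⟩ := Finset.mem_powersetCard.mp hS
        by_contra hcon
        push_neg at hcon
        obtain ⟨a, b, c, ha, hb, hc, hab, hac, hbc⟩ := Finset.two_lt_card_iff.mp hcon
        have hdist : ∀ x ∈ P.filter (fun p => S ⊆ N p), ∀ s ∈ S, dist x s = 1 := by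
          intro x hx s hs
          have h2 := (Finset.mem_filter.mp hx).2 hs
          exact (Finset.mem_filter.mp h2).2
        rcases key_geo d hd S hScard (hP S hSP hScard)
          (hdist a ha) (hdist b hb) (hdist c hc) with h | h | h
        exacts [hab h, hac h, hbc h]
    _ = 2 * (P.card).choose d := by
        rw [Finset.sum_const, Finset.card_powersetCard, smul_eq_mul, mul_comm]

theorem unit_distances_affinely_independent (d : ℕ) (hd : 2 ≤ d) :
    ∃ C : ℝ, 0 < C ∧
      ∀ P : Finset (EuclideanSpace ℝ (Fin d)),
        (∀ S : Finset (EuclideanSpace ℝ (Fin d)), S ⊆ P → S.card = d →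
          AffineIndependent ℝ (fun s : S => (s : EuclideanSpace ℝ (Fin d)))) →
        (Set.ncard {q : EuclideanSpace ℝ (Fin d) × EuclideanSpace ℝ (Fin d) |
            q.1 ∈ P ∧ q.2 ∈ P ∧ dist q.1 q.2 = 1} : ℝ) ≤
          C * (P.card : ℝ) ^ ((2 * (d : ℝ) - 1) / d) := by
  classical
  have hd1 : 1 ≤ d := by omega
  have hdR : (0:ℝ) < d := by positivity
  refine ⟨(d : ℝ) + 2, by positivity, ?_⟩
  intro P hP
  set N : EuclideanSpace ℝ (Fin d) → Finset (EuclideanSpace ℝ (Fin d)) :=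
    fun p => P.filter (fun q => dist p q = 1) with hN
  set n : ℕ := P.card with hn
  set e : ℝ := (2 * (d : ℝ) - 1) / d with he
  -- ncard to finset sum
  have hset : {q : EuclideanSpace ℝ (Fin d) × EuclideanSpace ℝ (Fin d) |
      q.1 ∈ P ∧ q.2 ∈ P ∧ dist q.1 q.2 = 1} =
      ↑((P ×ˢ P).filter fun q => dist q.1 q.2 = 1) := by
    ext q
    simp [Finset.mem_filter, Finset.mem_product, and_assoc]
  rw [hset, Set.ncard_coe_finset]
  have hcard : ((P ×ˢ P).filter fun q => dist q.1 q.2 = 1).card = ∑ p ∈ P, (N p).card := by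
    rw [Finset.card_filter, Finset.sum_product]
    exact Finset.sum_congr rfl fun p _ => (Finset.card_filter _ _).symm
  rw [hcard]
  rcases Finset.eq_empty_or_nonempty P with rfl | hPne
  · simp only [Finset.sum_empty, Nat.cast_zero]
    positivity
  have hn1 : 1 ≤ n := Finset.card_pos.mpr hPne
  have hnR1 : (1:ℝ) ≤ (n:ℝ) := by exact_mod_cast hn1
  have he1 : 1 ≤ e := by
    rw [he, le_div_iff₀ hdR]
    have : (1:ℝ) ≤ d := by exact_mod_cast hd1
    linarith
  have hne : (n:ℝ) ^ e ≤ (n:ℝ) ^ e := le_refl _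
  have hnle : (n:ℝ) ≤ (n:ℝ) ^ e := by
    calc (n:ℝ) = (n:ℝ) ^ (1:ℝ) := (Real.rpow_one _).symm
      _ ≤ (n:ℝ) ^ e := Real.rpow_le_rpow_of_exponent_le hnR1 he1
  have hnepos : (0:ℝ) ≤ (n:ℝ) ^ e := Real.rpow_nonneg (by positivity) e
  -- nat bound on sum of pow
  have hC : ∑ p ∈ P, ((N p).card - d)^d ≤ 2 * n^d := by
    calc ∑ p ∈ P, ((N p).card - d)^d
        ≤ ∑ p ∈ P, d.factorial * ((N p).card).choose d :=
          Finset.sum_le_sum fun p _ => nat_sub_pow_le_desc _ d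
      _ = d.factorial * ∑ p ∈ P, ((N p).card).choose d := by rw [Finset.mul_sum]
      _ ≤ d.factorial * (2 * n.choose d) :=
          Nat.mul_le_mul_left _ (count_le d hd1 P hP)
      _ = 2 * (d.factorial * n.choose d) := by ring
      _ = 2 * n.descFactorial d := by rw [Nat.descFactorial_eq_factorial_mul_choose]
      _ ≤ 2 * n^d := Nat.mul_le_mul_left _ (Nat.descFactorial_le_pow _ _)
  -- real Jensen
  set M : ℕ := ∑ p ∈ P, ((N p).card - d) with hM
  have hBpow : ((M:ℝ))^d ≤ 2 * (n:ℝ)^(2*d-1) := by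
    obtain ⟨d', rfl⟩ : ∃ d', d = d' + 1 := ⟨d - 1, by omega⟩
    have hjen := pow_sum_le_card_mul_sum_pow
      (s := P) (f := fun p => (((N p).card - (d'+1) : ℕ) : ℝ))
      (fun i _ => by positivity) d'
    have hcast : ((M:ℝ)) = ∑ p ∈ P, (((N p).card - (d'+1) : ℕ) : ℝ) := by
      rw [hM]; push_cast; ring
    have hsum : ∑ p ∈ P, ((((N p).card - (d'+1) : ℕ) : ℝ))^(d'+1) ≤ 2 * (n:ℝ)^(d'+1) := by
      have := hC
      have : ((∑ p ∈ P, ((N p).card - (d'+1))^(d'+1) : ℕ) : ℝ) ≤ ((2 * n^(d'+1) : ℕ) : ℝ) := by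
        exact_mod_cast hC
      push_cast at this
      convert this using 2
    calc ((M:ℝ))^(d'+1) = (∑ p ∈ P, (((N p).card - (d'+1) : ℕ) : ℝ))^(d'+1) := by rw [hcast]
      _ ≤ (P.card : ℝ)^d' * ∑ p ∈ P, ((((N p).card - (d'+1) : ℕ) : ℝ))^(d'+1) := hjen
      _ ≤ (n:ℝ)^d' * (2 * (n:ℝ)^(d'+1)) := by
          apply mul_le_mul_of_nonneg_left hsum (by positivity)
      _ = 2 * (n:ℝ)^(2*(d'+1)-1) := by
          rw [show 2*(d'+1)-1 = d' + (d'+1) by omega, pow_add]; ring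
  -- rpow identity
  have hrpow : ((n:ℝ) ^ e)^d = (n:ℝ)^(2*d-1) := by
    rw [← Real.rpow_natCast ((n:ℝ)^e) d, ← Real.rpow_mul (by positivity)]
    have hcast2 : ((2*d-1 : ℕ) : ℝ) = 2*(d:ℝ)-1 := by
      rw [Nat.cast_sub (by omega : 1 ≤ 2*d)]; push_cast; ring
    have : e * d = ((2*d-1 : ℕ) : ℝ) := by
      rw [hcast2, he, div_mul_cancel₀ _ (ne_of_gt hdR)]
    rw [this, Real.rpow_natCast]
  have hMle : (M:ℝ) ≤ 2 * (n:ℝ)^e := by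
    apply le_of_pow_le_pow_left₀ (by omega : d ≠ 0) (by positivity)
    calc (M:ℝ)^d ≤ 2 * (n:ℝ)^(2*d-1) := hBpow
      _ ≤ 2^d * (n:ℝ)^(2*d-1) := by
          apply mul_le_mul_of_nonneg_right _ (by positivity)
          calc (2:ℝ) = 2^1 := (pow_one 2).symm
            _ ≤ 2^d := pow_le_pow_right₀ (by norm_num) hd1
      _ = (2 * (n:ℝ)^e)^d := by rw [mul_pow, hrpow]
  -- total
  have hmM : ∑ p ∈ P, (N p).card ≤ M + d * n := by
    calc ∑ p ∈ P, (N p).card ≤ ∑ p ∈ P, (((N p).card - d) + d) :=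
          Finset.sum_le_sum fun p _ => by omega
      _ = M + d * n := by rw [Finset.sum_add_distrib, Finset.sum_const, smul_eq_mul, hM, hn, mul_comm]
  have hmMR : ((∑ p ∈ P, (N p).card : ℕ) : ℝ) ≤ (M:ℝ) + d * n := by exact_mod_cast hmM
  calc ((∑ p ∈ P, (N p).card : ℕ) : ℝ) ≤ (M:ℝ) + d * n := hmMR
    _ ≤ 2 * (n:ℝ)^e + d * (n:ℝ)^e := by
        have := mul_le_mul_of_nonneg_left hnle (by positivity : (0:ℝ) ≤ (d:ℝ))
        linarith
    _ = ((d:ℝ) + 2) * (n:ℝ)^e := by ring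
end

section
/- Let d ≥ 2 and let P ⊂ ℝ^d be finite with every d-element subset of P affinely independent. Define G = {(p,b) : p ∈ P, |b| = 1, p + b ∈ P} and let V'' be the set of tuples (p, b_1, ..., b_d) with each (p, b_j) ∈ G and the b_j pairwise distinct. Then the map Φ(p, b_1, ..., b_d) = (p + b_1, ..., p + b_d) from V'' to P^d is at most two-to-one. -/
open Module

/-- Two points whose distances to each `y j` agree (all equal to 1) give differences
orthogonal to the `y j - y i`. -/
lemma aux_inner_eq_zero {d : ℕ} {y : Fin d → EuclideanSpace ℝ (Fin d)}
    {p q : EuclideanSpace ℝ (Fin d)}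
    (hp : ∀ j, ‖y j - p‖ = 1) (hq : ∀ j, ‖y j - q‖ = 1) (i j : Fin d) :
    (inner ℝ (y j - y i) (q - p) : ℝ) = 0 := by
  have e1 : ‖y j - p‖ ^ 2 = 1 := by rw [hp j]; norm_num
  have e2 : ‖y i - p‖ ^ 2 = 1 := by rw [hp i]; norm_num
  have e3 : ‖y j - q‖ ^ 2 = 1 := by rw [hq j]; norm_num
  have e4 : ‖y i - q‖ ^ 2 = 1 := by rw [hq i]; norm_num
  rw [norm_sub_sq_real] at e1 e2 e3 e4
  rw [inner_sub_left, inner_sub_right, inner_sub_right]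
  linarith

/-- Three points on a unit sphere, with the third on the line through the first two,
must coincide with one of the first two. -/
lemma aux_three_on_sphere {E : Type*} [NormedAddCommGroup E] [InnerProductSpace ℝ E]
    {c p₁ p₂ p₃ : E} (h1 : ‖p₁ - c‖ = 1) (h2 : ‖p₂ - c‖ = 1) (h3 : ‖p₃ - c‖ = 1)
    {t : ℝ} (ht : p₃ - p₁ = t • (p₂ - p₁)) (hne3 : p₃ ≠ p₁) (hne2 : p₂ ≠ p₁) :
    p₃ = p₂ := by
  set u := p₁ - c with hu
  set v := p₂ - p₁ with hv
  have hp2 : p₂ - c = u + v := by rw [hu, hv]; abel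
  have hp3 : p₃ - c = u + t • v := by
    rw [hu, ← ht]; abel
  have hv0 : v ≠ 0 := sub_ne_zero.2 hne2
  have ht0 : t ≠ 0 := by
    intro h; apply hne3
    have := ht; rw [h, zero_smul, sub_eq_zero] at this; exact this
  have e1 : ‖u‖ ^ 2 = 1 := by rw [h1]; norm_num
  have e2 : ‖u + v‖ ^ 2 = 1 := by rw [← hp2, h2]; norm_num
  have e3 : ‖u + t • v‖ ^ 2 = 1 := by rw [← hp3, h3]; norm_num
  rw [norm_add_sq_real] at e2 e3
  rw [inner_smul_right, norm_smul] at e3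
  have hvpos : (0:ℝ) < ‖v‖ ^ 2 := by
    have := norm_pos_iff.mpr hv0
    positivity
  have ht1 : t = 1 := by
    have e3' : ‖u‖ ^ 2 + 2 * (t * inner ℝ u v) + t ^ 2 * ‖v‖ ^ 2 = 1 := by
      rw [mul_pow, Real.norm_eq_abs, sq_abs] at e3; linarith
    have key : t * (t - 1) * ‖v‖ ^ 2 = 0 := by
      linear_combination e3' - e1 - t * (e2 - e1)
    rcases mul_eq_zero.1 key with h | h
    · rcases mul_eq_zero.1 h with h' | h'
      · exact absurd h' ht0
      · linarith
    · linarith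
  have : p₃ - p₁ = p₂ - p₁ := by rw [ht, ht1, one_smul]
  exact sub_left_inj.mp this

/-- In the orthogonal complement of the span of the `d-1` independent difference
vectors of an affinely independent `d`-tuple in `ℝ^d`, every vector is a multiple of a
fixed nonzero one. -/
lemma aux_parallel {d : ℕ} (hd : 2 ≤ d) {y : Fin d → EuclideanSpace ℝ (Fin d)}
    (hy : AffineIndependent ℝ y) {u w : EuclideanSpace ℝ (Fin d)}
    (hu : ∀ j, (inner ℝ (y j - y ⟨0, by omega⟩) u : ℝ) = 0)
    (hw : ∀ j, (inner ℝ (y j - y ⟨0, by omega⟩) w : ℝ) = 0)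
    (hu0 : u ≠ 0) : ∃ t : ℝ, w = t • u := by
  set i0 : Fin d := ⟨0, by omega⟩ with hi0
  set f : {x : Fin d // x ≠ i0} → EuclideanSpace ℝ (Fin d) := fun j => y j - y i0 with hf
  have hli : LinearIndependent ℝ f := by
    have := (affineIndependent_iff_linearIndependent_vsub ℝ y i0).1 hy
    simpa [hf] using this
  set K : Submodule ℝ (EuclideanSpace ℝ (Fin d)) := Submodule.span ℝ (Set.range f) with hK
  have hcard : Fintype.card {x : Fin d // x ≠ i0} = d - 1 := by
    simp [Fintype.card_subtype_compl, Fintype.card_subtype_eq]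
  have hfr : finrank ℝ K = d - 1 := by
    rw [hK, finrank_span_eq_card hli, hcard]
  have hfrE : finrank ℝ (EuclideanSpace ℝ (Fin d)) = d := finrank_euclideanSpace_fin
  have hsum := Submodule.finrank_add_finrank_orthogonal K
  rw [hfr, hfrE] at hsum
  have hKo : finrank ℝ Kᗮ = 1 := by omega
  have mem_orth : ∀ z : EuclideanSpace ℝ (Fin d),
      (∀ j, (inner ℝ (y j - y i0) z : ℝ) = 0) → z ∈ Kᗮ := by
    intro z hz
    rw [Submodule.mem_orthogonal]
    intro x hx
    induction hx using Submodule.span_induction with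
    | mem x hx => rcases hx with ⟨j, rfl⟩; exact hz j
    | zero => simp
    | add x y' _ _ hx hy' => rw [inner_add_left, hx, hy']; ring
    | smul c x _ hx => rw [inner_smul_left, hx]; ring
  have huK : u ∈ Kᗮ := mem_orth u hu
  have hwK : w ∈ Kᗮ := mem_orth w hw
  have hun : (⟨u, huK⟩ : Kᗮ) ≠ 0 := by
    intro h
    exact hu0 (congrArg Subtype.val h)
  obtain ⟨c, hc⟩ := (finrank_eq_one_iff_of_nonzero' (⟨u, huK⟩ : Kᗮ) hun).1 hKo ⟨w, hwK⟩
  exact ⟨c, by simpa using congrArg Subtype.val hc.symm⟩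

theorem phi_at_most_two_to_one (d : ℕ) (hd : 2 ≤ d)
    (P : Finset (EuclideanSpace ℝ (Fin d)))
    (hP : ∀ S : Finset (EuclideanSpace ℝ (Fin d)), S ⊆ P → S.card = d →
      AffineIndependent ℝ (fun s : S => (s : EuclideanSpace ℝ (Fin d))))
    (y : Fin d → EuclideanSpace ℝ (Fin d)) :
    ∃ v₁ v₂ : EuclideanSpace ℝ (Fin d) × (Fin d → EuclideanSpace ℝ (Fin d)),
      {v : EuclideanSpace ℝ (Fin d) × (Fin d → EuclideanSpace ℝ (Fin d)) |
        ((∀ j, v.1 ∈ P ∧ ‖v.2 j‖ = 1 ∧ v.1 + v.2 j ∈ P) ∧ Function.Injective v.2) ∧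
        (fun j => v.1 + v.2 j) = y} ⊆ {v₁, v₂} := by
  classical
  set F : Set (EuclideanSpace ℝ (Fin d) × (Fin d → EuclideanSpace ℝ (Fin d))) :=
    {v | ((∀ j, v.1 ∈ P ∧ ‖v.2 j‖ = 1 ∧ v.1 + v.2 j ∈ P) ∧ Function.Injective v.2) ∧
        (fun j => v.1 + v.2 j) = y} with hF
  -- basic facts about fiber elements
  have hsnd : ∀ v ∈ F, ∀ j, v.2 j = y j - v.1 := by
    intro v hv j
    have := congrFun hv.2 j
    rw [← this]; abel
  have hdist : ∀ v ∈ F, ∀ j, ‖y j - v.1‖ = 1 := by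
    intro v hv j
    rw [show y j - v.1 = v.2 j by rw [hsnd v hv j]]
    exact (hv.1.1 j).2.1
  have hext : ∀ v ∈ F, ∀ w ∈ F, v.1 = w.1 → v = w := by
    intro v hv w hw h
    refine Prod.ext h (funext fun j => ?_)
    rw [hsnd v hv j, hsnd w hw j, h]
  rcases Set.eq_empty_or_nonempty F with hFe | ⟨v₁, hv₁⟩
  · exact ⟨⟨0, 0⟩, ⟨0, 0⟩, by rw [hFe]; exact Set.empty_subset _⟩
  -- y is affinely independent
  have hyinj : Function.Injective y := by
    intro a b hab
    apply hv₁.1.2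
    have ha := congrFun hv₁.2 a
    have hb := congrFun hv₁.2 b
    have : v₁.1 + v₁.2 a = v₁.1 + v₁.2 b := by rw [ha, hb, hab]
    exact add_left_cancel this
  have hyP : ∀ j, y j ∈ P := by
    intro j
    have := congrFun hv₁.2 j
    rw [← this]
    exact (hv₁.1.1 j).2.2
  have hy : AffineIndependent ℝ y := by
    set S : Finset (EuclideanSpace ℝ (Fin d)) := Finset.image y Finset.univ with hS
    have hSP : S ⊆ P := by
      intro x hx
      simp only [hS, Finset.mem_image] at hx
      obtain ⟨j, _, rfl⟩ := hx
      exact hyP j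
    have hScard : S.card = d := by
      rw [hS, Finset.card_image_of_injective _ hyinj, Finset.card_univ, Fintype.card_fin]
    have hai := hP S hSP hScard
    have he : ∀ j, y j ∈ S := fun j => Finset.mem_image.2 ⟨j, Finset.mem_univ j, rfl⟩
    have := hai.comp_embedding
      (⟨fun j => (⟨y j, he j⟩ : S), fun a b hab => hyinj (congrArg Subtype.val hab)⟩ :
        Fin d ↪ S)
    exact this
  by_cases h2 : ∀ v ∈ F, v = v₁
  · exact ⟨v₁, v₁, fun v hv => by simp [h2 v hv]⟩
  push_neg at h2
  obtain ⟨v₂, hv₂, hne21⟩ := h2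
  refine ⟨v₁, v₂, fun v hv => ?_⟩
  simp only [Set.mem_insert_iff, Set.mem_singleton_iff]
  by_cases hc1 : v.1 = v₁.1
  · exact Or.inl (hext v hv v₁ hv₁ hc1)
  by_cases hc2 : v.1 = v₂.1
  · exact Or.inr (hext v hv v₂ hv₂ hc2)
  exfalso
  -- three distinct points equidistant from all y j
  have hne12 : v₂.1 ≠ v₁.1 := fun h => hne21 (hext v₂ hv₂ v₁ hv₁ h)
  set i0 : Fin d := ⟨0, by omega⟩ with hi0
  have hu : ∀ j, (inner ℝ (y j - y i0) (v₂.1 - v₁.1) : ℝ) = 0 :=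
    fun j => aux_inner_eq_zero (hdist v₁ hv₁) (hdist v₂ hv₂) i0 j
  have hw : ∀ j, (inner ℝ (y j - y i0) (v.1 - v₁.1) : ℝ) = 0 :=
    fun j => aux_inner_eq_zero (hdist v₁ hv₁) (hdist v hv) i0 j
  have hu0 : v₂.1 - v₁.1 ≠ 0 := sub_ne_zero.2 hne12
  obtain ⟨t, htw⟩ := aux_parallel hd hy hu hw hu0
  have h3 : v.1 = v₂.1 := by
    refine aux_three_on_sphere (c := y i0) ?_ ?_ ?_ htw ?_ hne12
    · rw [norm_sub_rev]; exact hdist v₁ hv₁ i0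
    · rw [norm_sub_rev]; exact hdist v₂ hv₂ i0
    · rw [norm_sub_rev]; exact hdist v hv i0
    · exact fun h => hc1 (sub_eq_zero.1 (by rw [← sub_eq_zero] at h; exact h))
  exact hc2 h3
end

section
/- For all sufficiently small δ > 0 and points c_1, c_2 ∈ ℝ² with |c_1 - c_2| ≤ 2 - η (where η > 0 is fixed), the Lebesgue measure of the intersection of annuli A(c_1, δ) ∩ A(c_2, δ) is at most C_η δ² / (δ + |c_1 - c_2|), where A(c, δ) = {x ∈ ℝ² : 1 - 2δ ≤ |x - c| ≤ 1 + 2δ}. -/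
open MeasureTheory

section AnnuliAux

open Metric Set

lemma annuli_slice_vol {A h : ℝ} (hA : 0 < A) (hh : 0 ≤ h) :
    volume {b : ℝ | A ≤ b^2 ∧ b^2 ≤ A + h} ≤ ENNReal.ofReal (h / Real.sqrt A) := by
  set s := Real.sqrt A with hs
  set t := Real.sqrt (A + h) with ht
  have hs0 : 0 < s := Real.sqrt_pos.2 hA
  have ht0 : 0 ≤ t := Real.sqrt_nonneg _
  have hsq : s^2 = A := Real.sq_sqrt hA.le
  have htq : t^2 = A + h := Real.sq_sqrt (by linarith)
  have hst : s ≤ t := Real.sqrt_le_sqrt (by linarith)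
  have hsub : {b : ℝ | A ≤ b^2 ∧ b^2 ≤ A + h} ⊆ Icc (-t) (-s) ∪ Icc s t := by
    rintro b ⟨h1, h2⟩
    rcases le_or_gt 0 b with hb | hb
    · right
      constructor
      · rw [hs, ← Real.sqrt_sq hb]; exact Real.sqrt_le_sqrt h1
      · rw [ht, ← Real.sqrt_sq hb]; exact Real.sqrt_le_sqrt h2
    · left
      have hnb : -b = Real.sqrt (b^2) := by
        rw [Real.sqrt_sq_eq_abs, abs_of_neg hb]
      constructor
      · rw [neg_le, hnb, ht]; exact Real.sqrt_le_sqrt h2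
      · rw [le_neg, hnb, hs]; exact Real.sqrt_le_sqrt h1
  calc volume {b : ℝ | A ≤ b^2 ∧ b^2 ≤ A + h} ≤ volume (Icc (-t) (-s)) + volume (Icc s t) :=
        le_trans (measure_mono hsub) (measure_union_le _ _)
    _ = ENNReal.ofReal (t - s) + ENNReal.ofReal (t - s) := by
        rw [Real.volume_Icc, Real.volume_Icc]; ring_nf
    _ = ENNReal.ofReal ((t - s) + (t - s)) := by
        rw [ENNReal.ofReal_add (by linarith) (by linarith)]
    _ ≤ ENNReal.ofReal (h / s) := by
        apply ENNReal.ofReal_le_ofReal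
        have key : t - s ≤ h / (2 * s) := by
          rw [sub_le_iff_le_add, div_add' _ _ _ (by positivity), le_div_iff₀ (by positivity)]
          nlinarith [sq_nonneg (t - s)]
        have h2s : 2 * (h / (2 * s)) = h / s := by field_simp
        linarith [key]

lemma annuli_T_meas (lo hi δ : ℝ) :
    MeasurableSet {p : ℝ × ℝ | p.1 ∈ Icc lo hi ∧
      (1-2*δ)^2 - p.1^2 ≤ p.2^2 ∧ p.2^2 ≤ (1+2*δ)^2 - p.1^2} := by
  apply MeasurableSet.inter
  · exact measurable_fst measurableSet_Icc
  · exact MeasurableSet.inter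
      (measurableSet_le (by fun_prop) (measurable_snd.pow_const 2))
      (measurableSet_le (measurable_snd.pow_const 2) (by fun_prop))

lemma annuli_T_vol (lo hi δ κh : ℝ) (hδ : 0 < δ) (hκ : 0 < κh)
    (hA : ∀ a ∈ Icc lo hi, κh ≤ (1-2*δ)^2 - a^2) :
    volume {p : ℝ × ℝ | p.1 ∈ Icc lo hi ∧ (1-2*δ)^2 - p.1^2 ≤ p.2^2 ∧ p.2^2 ≤ (1+2*δ)^2 - p.1^2}
      ≤ ENNReal.ofReal (8*δ / Real.sqrt κh) * ENNReal.ofReal (hi - lo) := by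
  set T := {p : ℝ × ℝ | p.1 ∈ Icc lo hi ∧ (1-2*δ)^2 - p.1^2 ≤ p.2^2 ∧ p.2^2 ≤ (1+2*δ)^2 - p.1^2}
    with hT
  have hTm : MeasurableSet T := annuli_T_meas lo hi δ
  rw [Measure.volume_eq_prod, Measure.prod_apply hTm]
  have hslice : ∀ a : ℝ, volume (Prod.mk a ⁻¹' T) ≤
      Set.indicator (Icc lo hi) (fun _ => ENNReal.ofReal (8*δ / Real.sqrt κh)) a := by
    intro a
    by_cases ha : a ∈ Icc lo hi
    · rw [Set.indicator_of_mem ha]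
      have hAa := hA a ha
      have hpre : Prod.mk a ⁻¹' T ⊆
          {b : ℝ | (1-2*δ)^2 - a^2 ≤ b^2 ∧ b^2 ≤ ((1-2*δ)^2 - a^2) + 8*δ} := by
        rintro b ⟨-, h1, h2⟩
        exact ⟨h1, by nlinarith⟩
      calc volume (Prod.mk a ⁻¹' T) ≤ _ := measure_mono hpre
        _ ≤ ENNReal.ofReal (8*δ / Real.sqrt ((1-2*δ)^2 - a^2)) :=
            annuli_slice_vol (by linarith) (by linarith)
        _ ≤ ENNReal.ofReal (8*δ / Real.sqrt κh) := by
            apply ENNReal.ofReal_le_ofReal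
            apply div_le_div_of_nonneg_left (by linarith) (Real.sqrt_pos.2 hκ)
            exact Real.sqrt_le_sqrt hAa
    · rw [Set.indicator_of_notMem ha]
      have : Prod.mk a ⁻¹' T = ∅ := by
        ext b; simp only [Set.mem_preimage, Set.mem_empty_iff_false, iff_false]
        rintro ⟨h1, -⟩; exact ha h1
      simp [this]
  calc ∫⁻ a, volume (Prod.mk a ⁻¹' T) ≤
      ∫⁻ a, Set.indicator (Icc lo hi) (fun _ => ENNReal.ofReal (8*δ / Real.sqrt κh)) a :=
        lintegral_mono hslice
    _ = ENNReal.ofReal (8*δ / Real.sqrt κh) * ENNReal.ofReal (hi - lo) := by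
        rw [lintegral_indicator measurableSet_Icc, setLIntegral_const, Real.volume_Icc]

lemma annuli_vol_closedBall (x : EuclideanSpace ℝ (Fin 2)) {r : ℝ} (hr : 0 ≤ r) :
    volume (closedBall x r) = ENNReal.ofReal (Real.pi * r^2) := by
  rw [EuclideanSpace.volume_closedBall]
  simp only [Fintype.card_fin]
  rw [← ENNReal.ofReal_pow hr, ← ENNReal.ofReal_mul (by positivity)]
  congr 1
  rw [Real.sq_sqrt Real.pi_nonneg]
  norm_num [Real.Gamma_two]
  ring

lemma annuli_vol_ball (x : EuclideanSpace ℝ (Fin 2)) {r : ℝ} (hr : 0 ≤ r) :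
    volume (ball x r) = ENNReal.ofReal (Real.pi * r^2) := by
  rw [EuclideanSpace.volume_ball]
  simp only [Fintype.card_fin]
  rw [← ENNReal.ofReal_pow hr, ← ENNReal.ofReal_mul (by positivity)]
  congr 1
  rw [Real.sq_sqrt Real.pi_nonneg]
  norm_num [Real.Gamma_two]
  ring

lemma annuli_orthonormal (u : EuclideanSpace ℝ (Fin 2)) (hu : ‖u‖ = 1) :
    Orthonormal ℝ ![u, (WithLp.equiv 2 _).symm ![-(u 1), u 0]] := by
  set w : EuclideanSpace ℝ (Fin 2) := (WithLp.equiv 2 _).symm ![-(u 1), u 0] with hw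
  have hw0 : w 0 = -(u 1) := rfl
  have hw1 : w 1 = u 0 := rfl
  have hnu : (u 0)^2 + (u 1)^2 = 1 := by
    have := congrArg (·^2) hu
    rw [EuclideanSpace.norm_eq] at this
    simp only [Real.norm_eq_abs, Fin.sum_univ_two, sq_abs] at this
    rw [Real.sq_sqrt (by positivity)] at this
    simpa using this
  have hnw : ‖w‖ = 1 := by
    rw [EuclideanSpace.norm_eq]
    simp only [Fin.sum_univ_two, hw0, hw1, Real.norm_eq_abs, sq_abs]
    rw [show (-(u 1))^2 + (u 0)^2 = (u 0)^2 + (u 1)^2 by ring, hnu, Real.sqrt_one]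
  constructor
  · intro i; fin_cases i <;> simp [hu, hnw]
  · intro i j hij
    fin_cases i <;> fin_cases j <;> simp_all [PiLp.inner_apply, Fin.sum_univ_two,
      RCLike.inner_apply] <;> ring

end AnnuliAux

set_option maxHeartbeats 2000000 in
theorem annuli_intersection_bound (η : ℝ) (hη : 0 < η) :
    ∃ C : ℝ, 0 < C ∧ ∃ δ₀ : ℝ, 0 < δ₀ ∧
      ∀ δ : ℝ, 0 < δ → δ < δ₀ →
      ∀ c₁ c₂ : EuclideanSpace ℝ (Fin 2), dist c₁ c₂ ≤ 2 - η →
      volume ({x : EuclideanSpace ℝ (Fin 2) |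
            1 - 2 * δ ≤ dist x c₁ ∧ dist x c₁ ≤ 1 + 2 * δ} ∩
          {x : EuclideanSpace ℝ (Fin 2) |
            1 - 2 * δ ≤ dist x c₂ ∧ dist x c₂ ≤ 1 + 2 * δ}) ≤
        ENNReal.ofReal (C * δ ^ 2 / (δ + dist c₁ c₂)) := by
  classical
  set t := min η 1 with htdef
  have ht0 : 0 < t := lt_min hη one_pos
  have ht1 : t ≤ 1 := min_le_right _ _
  have htη : t ≤ η := min_le_left _ _
  have hst0 : 0 < Real.sqrt t := Real.sqrt_pos.2 ht0
  have hst1 : Real.sqrt t ≤ 1 := Real.sqrt_le_one.mpr ht1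
  have hstsq : (Real.sqrt t)^2 = t := Real.sq_sqrt ht0.le
  refine ⟨2000 / Real.sqrt t, by positivity, t / 1000, by positivity, ?_⟩
  intro δ hδ hδ0 c₁ c₂ hdist
  set C := 2000 / Real.sqrt t with hCdef
  have hC2000 : 2000 ≤ C := by
    rw [hCdef, le_div_iff₀ hst0]; nlinarith
  set d := dist c₁ c₂ with hddef
  have hd0 : 0 ≤ d := dist_nonneg
  have hδsmall : δ < 1/1000 := lt_of_lt_of_le hδ0 (by linarith)
  have hπ : Real.pi < 3.15 := by
    have := Real.pi_lt_d2; linarith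
  set S := ({x : EuclideanSpace ℝ (Fin 2) |
        1 - 2 * δ ≤ dist x c₁ ∧ dist x c₁ ≤ 1 + 2 * δ} ∩
      {x : EuclideanSpace ℝ (Fin 2) |
        1 - 2 * δ ≤ dist x c₂ ∧ dist x c₂ ≤ 1 + 2 * δ}) with hSdef
  rcases le_or_gt d (32 * δ) with hcase | hcase
  · -- small distance : use the annulus area bound
    have hsub : S ⊆ Metric.closedBall c₁ (1 + 2*δ) \ Metric.ball c₁ (1 - 2*δ) := by
      rintro x ⟨⟨h1, h2⟩, -⟩
      refine ⟨Metric.mem_closedBall.2 (by linarith), fun hx => ?_⟩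
      have := Metric.mem_ball.1 hx
      linarith
    have hball : Metric.ball c₁ (1 - 2*δ) ⊆ Metric.closedBall c₁ (1 + 2*δ) := by
      intro y hy
      exact Metric.mem_closedBall.2 (le_of_lt (lt_of_lt_of_le (Metric.mem_ball.1 hy) (by linarith)))
    have hdiff : volume (Metric.closedBall c₁ (1 + 2*δ) \ Metric.ball c₁ (1 - 2*δ)) =
        volume (Metric.closedBall c₁ (1 + 2*δ)) - volume (Metric.ball c₁ (1 - 2*δ)) := by
      apply measure_diff hball measurableSet_ball.nullMeasurableSet
      rw [annuli_vol_ball c₁ (by linarith : (0:ℝ) ≤ 1 - 2*δ)]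
      exact ENNReal.ofReal_ne_top
    calc volume S ≤ volume (Metric.closedBall c₁ (1 + 2*δ) \ Metric.ball c₁ (1 - 2*δ)) :=
          measure_mono hsub
      _ = ENNReal.ofReal (Real.pi * (1+2*δ)^2) - ENNReal.ofReal (Real.pi * (1-2*δ)^2) := by
          rw [hdiff, annuli_vol_closedBall c₁ (by linarith : (0:ℝ) ≤ 1 + 2*δ),
            annuli_vol_ball c₁ (by linarith : (0:ℝ) ≤ 1 - 2*δ)]
      _ = ENNReal.ofReal (Real.pi * (1+2*δ)^2 - Real.pi * (1-2*δ)^2) := by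
          rw [ENNReal.ofReal_sub _ (by positivity)]
      _ ≤ ENNReal.ofReal (C * δ ^ 2 / (δ + d)) := by
          apply ENNReal.ofReal_le_ofReal
          rw [le_div_iff₀ (by positivity : (0:ℝ) < δ + d)]
          have hexp : Real.pi * (1+2*δ)^2 - Real.pi * (1-2*δ)^2 = Real.pi * (8*δ) := by ring
          rw [hexp]
          have b2 : δ + d ≤ 33*δ := by linarith
          have e1 := mul_le_mul_of_nonneg_right hπ.le
            (by positivity : (0:ℝ) ≤ 8*δ*(δ+d))
          have e2 := mul_le_mul_of_nonneg_left b2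
            (by positivity : (0:ℝ) ≤ 3.15 * (8*δ))
          have e3 := mul_le_mul_of_nonneg_right hC2000 (sq_nonneg δ)
          nlinarith [e1, e2, e3, mul_pos hδ hδ]
  · -- large distance : transversality bound
    have hdpos : 0 < d := lt_trans (by positivity) hcase
    set v := c₂ - c₁ with hvdef
    have hv : ‖v‖ = d := by rw [hvdef, hddef, dist_comm, dist_eq_norm]
    set u : EuclideanSpace ℝ (Fin 2) := d⁻¹ • v with hudef
    have hu : ‖u‖ = 1 := by
      rw [hudef, norm_smul, Real.norm_eq_abs, abs_inv, abs_of_pos hdpos, hv,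
        inv_mul_cancel₀ hdpos.ne']
    have hvu : v = d • u := by
      rw [hudef, smul_smul, mul_inv_cancel₀ hdpos.ne', one_smul]
    -- orthonormal basis (u, w)
    obtain ⟨w, hon⟩ : ∃ w, Orthonormal ℝ ![u, w] := ⟨_, annuli_orthonormal u hu⟩
    obtain ⟨B, hB⟩ : ∃ B : OrthonormalBasis (Fin 2) ℝ (EuclideanSpace ℝ (Fin 2)),
        ⇑B = ![u, w] := by
      have hcard : Fintype.card (Fin 2) = Module.finrank ℝ (EuclideanSpace ℝ (Fin 2)) := by
        simp [finrank_euclideanSpace]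
      refine ⟨(basisOfLinearIndependentOfCardEqFinrank hon.linearIndependent
        hcard).toOrthonormalBasis
        (by rw [coe_basisOfLinearIndependentOfCardEqFinrank]; exact hon), ?_⟩
      rw [Module.Basis.coe_toOrthonormalBasis, coe_basisOfLinearIndependentOfCardEqFinrank]
    have hB0 : B 0 = u := by rw [hB]; rfl
    have hnorm : ∀ y : EuclideanSpace ℝ (Fin 2),
        ‖y‖^2 = (B.repr y 0)^2 + (B.repr y 1)^2 := by
      intro y
      have h1 : ‖B.repr y‖ = ‖y‖ := B.repr.norm_map y
      rw [EuclideanSpace.norm_eq] at h1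
      rw [← h1, Real.sq_sqrt (by positivity)]
      simp [Fin.sum_univ_two, sq_abs]
    have hru : B.repr (d • u) = WithLp.toLp 2 (fun j : Fin 2 => if j = 0 then d else 0) := by
      rw [← hB0, _root_.map_smul, OrthonormalBasis.repr_self]
      ext j
      fin_cases j <;> simp [EuclideanSpace.single_apply]
    set Φ : EuclideanSpace ℝ (Fin 2) → ℝ × ℝ := fun y => (B.repr y 0, B.repr y 1) with hΦdef
    have hΦ : MeasurePreserving Φ volume volume := by
      have h1 := B.measurePreserving_repr
      have h2 := EuclideanSpace.volume_preserving_symm_measurableEquiv_toLp (Fin 2)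
      have h3 := volume_preserving_finTwoArrow ℝ
      exact (h3.comp (h2.comp h1) : MeasurePreserving _ _ _)
    set lo := (d^2 - 8*δ)/(2*d) with hlodef
    set hi := (d^2 + 8*δ)/(2*d) with hhidef
    set T := {p : ℝ × ℝ | p.1 ∈ Set.Icc lo hi ∧
        (1-2*δ)^2 - p.1^2 ≤ p.2^2 ∧ p.2^2 ≤ (1+2*δ)^2 - p.1^2} with hTdef
    -- the translated set is in the preimage of T
    have hS' : (fun y => y + c₁) ⁻¹' S ⊆ Φ ⁻¹' T := by
      intro x hx
      obtain ⟨⟨hx1, hx2⟩, hx3, hx4⟩ := hx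
      have e1 : dist (x + c₁) c₁ = ‖x‖ := by simp [dist_eq_norm]
      have e2 : dist (x + c₁) c₂ = ‖x - v‖ := by
        rw [dist_eq_norm, hvdef]
        congr 1
        abel
      rw [e1] at hx1 hx2
      rw [e2] at hx3 hx4
      set a := B.repr x 0 with hadef
      set b := B.repr x 1 with hbdef
      have h1 : ‖x‖^2 = a^2 + b^2 := hnorm x
      have h2 : ‖x - v‖^2 = (a - d)^2 + b^2 := by
        rw [hnorm (x - v), hvu, map_sub, hru]
        simp [hadef, hbdef]
      have hxl : (1-2*δ)^2 ≤ a^2 + b^2 := by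
        rw [← h1]; nlinarith [norm_nonneg x]
      have hxu : a^2 + b^2 ≤ (1+2*δ)^2 := by
        rw [← h1]; nlinarith [norm_nonneg x]
      have hyl : (1-2*δ)^2 ≤ (a - d)^2 + b^2 := by
        rw [← h2]; nlinarith [norm_nonneg (x - v)]
      have hyu : (a - d)^2 + b^2 ≤ (1+2*δ)^2 := by
        rw [← h2]; nlinarith [norm_nonneg (x - v)]
      have hsq8 : (1+2*δ)^2 - (1-2*δ)^2 = 8*δ := by ring
      refine ⟨⟨?_, ?_⟩, by linarith, by linarith⟩
      · rw [hlodef, div_le_iff₀ (by positivity : (0:ℝ) < 2*d)]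
        nlinarith
      · rw [hhidef, le_div_iff₀ (by positivity : (0:ℝ) < 2*d)]
        nlinarith
    -- bound on a ∈ [lo, hi]
    have hA : ∀ a ∈ Set.Icc lo hi, 3*t/16 ≤ (1-2*δ)^2 - a^2 := by
      intro a ⟨hal, hah⟩
      have hδt : δ < t/1000 := hδ0
      have habs : a ≤ 1 - 3*t/8 ∧ -(1 - 3*t/8) ≤ a := by
        constructor
        · refine le_trans hah ?_
          rw [hhidef, div_le_iff₀ (by positivity : (0:ℝ) < 2*d)]
          rcases le_or_gt d 1 with hd1 | hd1
          · nlinarith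
          · have hd2 : d ≤ 2 - η := hdist
            have hη1 : η < 1 := by linarith
            nlinarith
        · refine le_trans ?_ hal
          rw [hlodef, le_div_iff₀ (by positivity : (0:ℝ) < 2*d)]
          nlinarith
      obtain ⟨ha1, ha2⟩ := habs
      nlinarith [sq_nonneg a]
    -- put it all together
    have step1 : volume S = volume ((fun y => y + c₁) ⁻¹' S) :=
      (measure_preimage_add_right volume c₁ S).symm
    have step2 : volume ((fun y => y + c₁) ⁻¹' S) ≤ volume T := by
      calc volume ((fun y => y + c₁) ⁻¹' S) ≤ volume (Φ ⁻¹' T) := measure_mono hS'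
        _ = volume T := hΦ.measure_preimage (annuli_T_meas lo hi δ).nullMeasurableSet
    have step3 : volume T ≤
        ENNReal.ofReal (8*δ / Real.sqrt (3*t/16)) * ENNReal.ofReal (hi - lo) :=
      annuli_T_vol lo hi δ (3*t/16) hδ (by positivity) hA
    have hhl : hi - lo = 8*δ/d := by
      rw [hhidef, hlodef]
      field_simp
      ring
    rw [step1]
    refine le_trans (le_trans step2 step3) ?_
    rw [hhl, ← ENNReal.ofReal_mul (by positivity)]
    apply ENNReal.ofReal_le_ofReal
    -- final real arithmetic
    have hq0 : 0 < Real.sqrt (3*t/16) := Real.sqrt_pos.2 (by positivity)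
    have hq : Real.sqrt t / 3 ≤ Real.sqrt (3*t/16) := by
      have h9 : Real.sqrt t / 3 = Real.sqrt (t/9) := by
        rw [show t/9 = t * (1/3)^2 by ring, Real.sqrt_mul ht0.le,
          Real.sqrt_sq (by norm_num : (0:ℝ) ≤ 1/3)]
        ring
      rw [h9]
      exact Real.sqrt_le_sqrt (by linarith)
    set q := Real.sqrt (3*t/16) with hqdef
    set s := Real.sqrt t with hsdef
    have eL : 8*δ/q * (8*δ/d) = 64*δ^2/(q*d) := by field_simp; ring
    have eR : C*δ^2/(δ+d) = 2000*δ^2/(s*(δ+d)) := by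
      rw [hCdef]; field_simp
    rw [eL, eR, div_le_div_iff₀ (by positivity) (by positivity)]
    have k1 : 64*δ^2*(s*(δ+d)) ≤ 64*δ^2*(s*(2*d)) := by
      have := mul_le_mul_of_nonneg_left (show δ + d ≤ 2*d by linarith)
        (by positivity : (0:ℝ) ≤ 64*δ^2*s)
      nlinarith [this]
    have k2 : 2000*δ^2*((s/3)*d) ≤ 2000*δ^2*(q*d) :=
      mul_le_mul_of_nonneg_left (mul_le_mul_of_nonneg_right hq hdpos.le) (by positivity)
    nlinarith [k1, k2, mul_pos (mul_pos (mul_pos hδ hδ) hst0) hdpos]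
end

section
/- There is a constant C > 0 such that for all δ ∈ (0, 1/2) and κ ≥ 0, if (x_1, y_1, z_1) and (x_2, y_2, z_2) both lie in the shell A(0, δ) = {p ∈ ℝ³ : 1 - 2δ ≤ |p| ≤ 1 + 2δ} and |(x_1, y_1) − (x_2, y_2)| ≤ κ, then |(x_1, y_1, z_1) − (x_2, y_2, z_2)| ≤ C max(δ^{1/2}, κ^{1/2}) provided z_1 and z_2 have the same sign. -/
private lemma sq_sub_le_of_sign (z1 z2 D : ℝ) (h1 : z1 ^ 2 - z2 ^ 2 ≤ D)
    (h2 : z2 ^ 2 - z1 ^ 2 ≤ D) (hs : 0 ≤ z1 * z2) : (z1 - z2) ^ 2 ≤ D := by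
  rcases mul_nonneg_iff.mp hs with ⟨ha, hb⟩ | ⟨ha, hb⟩ <;> rcases le_total z1 z2 with h | h
  · nlinarith [mul_nonneg (sub_nonneg.2 h) ha]
  · nlinarith [mul_nonneg (sub_nonneg.2 h) hb]
  · nlinarith [mul_nonneg (sub_nonneg.2 h) (neg_nonneg.2 hb)]
  · nlinarith [mul_nonneg (sub_nonneg.2 h) (neg_nonneg.2 ha)]

set_option maxHeartbeats 1000000 in
theorem shell_points_close_of_close_projection :
    ∃ C : ℝ, 0 < C ∧
      ∀ δ κ : ℝ, 0 < δ → δ < 1 / 2 → 0 ≤ κ →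
      ∀ p₁ p₂ : EuclideanSpace ℝ (Fin 3),
        (1 - 2 * δ ≤ ‖p₁‖ ∧ ‖p₁‖ ≤ 1 + 2 * δ) →
        (1 - 2 * δ ≤ ‖p₂‖ ∧ ‖p₂‖ ≤ 1 + 2 * δ) →
        Real.sqrt ((p₁ 0 - p₂ 0) ^ 2 + (p₁ 1 - p₂ 1) ^ 2) ≤ κ →
        0 ≤ p₁ 2 * p₂ 2 →
        dist p₁ p₂ ≤ C * max (Real.sqrt δ) (Real.sqrt κ) := by
  refine ⟨5, by norm_num, ?_⟩
  intro δ κ hδ hδ2 hκ p₁ p₂ ⟨h1l, h1u⟩ ⟨h2l, h2u⟩ hproj hsign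
  set x1 := p₁ 0; set y1 := p₁ 1; set z1 := p₁ 2
  set x2 := p₂ 0; set y2 := p₂ 1; set z2 := p₂ 2
  have hn1 : ‖p₁‖ ^ 2 = x1 ^ 2 + y1 ^ 2 + z1 ^ 2 := by
    rw [EuclideanSpace.norm_eq, Real.sq_sqrt (by positivity)]
    simp [Fin.sum_univ_three, Real.norm_eq_abs, sq_abs]
    rfl
  have hn2 : ‖p₂‖ ^ 2 = x2 ^ 2 + y2 ^ 2 + z2 ^ 2 := by
    rw [EuclideanSpace.norm_eq, Real.sq_sqrt (by positivity)]
    simp [Fin.sum_univ_three, Real.norm_eq_abs, sq_abs]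
    rfl
  have hdist : dist p₁ p₂ = Real.sqrt ((x1 - x2) ^ 2 + (y1 - y2) ^ 2 + (z1 - z2) ^ 2) := by
    rw [EuclideanSpace.dist_eq]
    congr 1
    simp [Fin.sum_univ_three, Real.dist_eq, sq_abs]
    rfl
  have hs : (x1 - x2) ^ 2 + (y1 - y2) ^ 2 ≤ κ ^ 2 := by
    have h0 : (0:ℝ) ≤ (x1 - x2) ^ 2 + (y1 - y2) ^ 2 := by positivity
    calc (x1 - x2) ^ 2 + (y1 - y2) ^ 2
        = Real.sqrt ((x1 - x2) ^ 2 + (y1 - y2) ^ 2) ^ 2 := (Real.sq_sqrt h0).symm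
      _ ≤ κ ^ 2 := pow_le_pow_left₀ (Real.sqrt_nonneg _) hproj 2
  have htri : dist p₁ p₂ ≤ ‖p₁‖ + ‖p₂‖ := by
    rw [dist_eq_norm]; exact norm_sub_le _ _
  set N1 := ‖p₁‖ with hNd1
  set N2 := ‖p₂‖ with hNd2
  set d := dist p₁ p₂ with hdd
  clear_value x1 y1 z1 x2 y2 z2 N1 N2 d
  clear hNd1 hNd2 hdd hproj
  -- basic bounds
  have h1pos : (0:ℝ) < 1 - 2 * δ := by linarith
  have hN1u : N1 ^ 2 ≤ (1 + 2 * δ) ^ 2 := by nlinarith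
  have hN1l : (1 - 2 * δ) ^ 2 ≤ N1 ^ 2 := by nlinarith
  have hN2u : N2 ^ 2 ≤ (1 + 2 * δ) ^ 2 := by nlinarith
  have hN2l : (1 - 2 * δ) ^ 2 ≤ N2 ^ 2 := by nlinarith
  have h4 : (1 + 2 * δ) ^ 2 ≤ 4 := by nlinarith
  have hx1 : x1 ^ 2 ≤ 4 := by linarith [sq_nonneg y1, sq_nonneg z1]
  have hx2 : x2 ^ 2 ≤ 4 := by linarith [sq_nonneg y2, sq_nonneg z2]
  have hy1 : y1 ^ 2 ≤ 4 := by linarith [sq_nonneg x1, sq_nonneg z1]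
  have hy2 : y2 ^ 2 ≤ 4 := by linarith [sq_nonneg x2, sq_nonneg z2]
  -- bound on |z1^2 - z2^2|
  have habs : ∀ a b : ℝ, a ^ 2 ≤ 4 → b ^ 2 ≤ 4 → (a - b) ^ 2 ≤ κ ^ 2 → |a ^ 2 - b ^ 2| ≤ 4 * κ := by
    intro a b ha hb hab
    have h1 : |a - b| ≤ κ := by
      rw [← Real.sqrt_sq_eq_abs, ← Real.sqrt_sq hκ]
      exact Real.sqrt_le_sqrt hab
    have h2 : |a + b| ≤ 4 := by
      rw [← Real.sqrt_sq_eq_abs, ← Real.sqrt_sq (by norm_num : (0:ℝ) ≤ 4)]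
      apply Real.sqrt_le_sqrt; nlinarith [sq_nonneg (a - b)]
    calc |a ^ 2 - b ^ 2| = |a - b| * |a + b| := by rw [← abs_mul]; ring_nf
      _ ≤ κ * 4 := mul_le_mul h1 h2 (abs_nonneg _) hκ
      _ = 4 * κ := by ring
  have hsx : (x1 - x2) ^ 2 ≤ κ ^ 2 := by linarith [sq_nonneg (y1 - y2)]
  have hsy : (y1 - y2) ^ 2 ≤ κ ^ 2 := by linarith [sq_nonneg (x1 - x2)]
  have hax := abs_le.mp (habs x1 x2 hx1 hx2 hsx)
  have hay := abs_le.mp (habs y1 y2 hy1 hy2 hsy)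
  have hE1 : z1 ^ 2 - z2 ^ 2 ≤ 8 * δ + 8 * κ := by nlinarith [hax.1, hax.2, hay.1, hay.2]
  have hE2 : z2 ^ 2 - z1 ^ 2 ≤ 8 * δ + 8 * κ := by nlinarith [hax.1, hax.2, hay.1, hay.2]
  have hz : (z1 - z2) ^ 2 ≤ 8 * δ + 8 * κ :=
    sq_sub_le_of_sign z1 z2 _ hE1 hE2 hsign
  rcases le_or_gt 1 κ with hκ1 | hκ1
  · -- large κ: use trivial bound dist ≤ 4
    have hd4 : d ≤ 4 := by linarith
    have : (1:ℝ) ≤ Real.sqrt κ := by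
      rw [show (1:ℝ) = Real.sqrt 1 by simp]
      exact Real.sqrt_le_sqrt hκ1
    have hmax : (1:ℝ) ≤ max (Real.sqrt δ) (Real.sqrt κ) := le_trans this (le_max_right _ _)
    nlinarith
  · -- small κ
    set M := max δ κ with hM
    have hMpos : 0 < M := lt_of_lt_of_le hδ (le_max_left _ _)
    have hκM : κ ≤ M := le_max_right _ _
    have hδM : δ ≤ M := le_max_left _ _
    have hκ2 : κ ^ 2 ≤ κ := by nlinarith
    have hkey : (x1 - x2) ^ 2 + (y1 - y2) ^ 2 + (z1 - z2) ^ 2 ≤ 25 * M := by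
      linarith
    have hmax : max (Real.sqrt δ) (Real.sqrt κ) = Real.sqrt M := by
      rcases le_total δ κ with h | h
      · rw [hM, max_eq_right h, max_eq_right (Real.sqrt_le_sqrt h)]
      · rw [hM, max_eq_left h, max_eq_left (Real.sqrt_le_sqrt h)]
    rw [hdist, hmax]
    calc Real.sqrt ((x1 - x2) ^ 2 + (y1 - y2) ^ 2 + (z1 - z2) ^ 2)
        ≤ Real.sqrt (25 * M) := Real.sqrt_le_sqrt hkey
      _ = 5 * Real.sqrt M := by
          rw [show (25:ℝ) * M = 5 ^ 2 * M by ring, Real.sqrt_mul (by positivity), Real.sqrt_sq (by norm_num)]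
end
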